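/- Let A = Σ_{i=1}^{N} A_i and B = Σ_{i=1}^{N} B_i be extensive operators, both of range R, with local norms ‖A‖_l ≤ a and ‖B‖_l ≤ b. Then for every integer q ≥ 1 there exists a family (C_i)_{i=1,…,N} of matrices such that each C_i is supported on {i, i+1, …, min(i + q(R−1) + R − 1, N)} (an interval of at most q(R−1)+R consecutive sites), (1/q!)·(ad_A)^{q} B = Σ_{i=1}^{N} C_i, and max_i ‖C_i‖ ≤ (q+1)·(2Ra)^{q}·b, where ad_A X := [A, X]. -/

import Mathlib

open scoped BigOperators Nat Matrix.Norms.L2Operator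

/-- A matrix acting on the configuration space `Fin N → Fin d` is *supported* on a set `S`
of sites if `A x y = 0` whenever the configurations `x, y` differ at some site outside `S`,
and `A x y` depends only on the restrictions of `x` and `y` to `S`. -/
def SupportedOn {N d : ℕ} (A : Matrix (Fin N → Fin d) (Fin N → Fin d) ℂ)
    (S : Set (Fin N)) : Prop :=
  (∀ x y, (∃ i ∉ S, x i ≠ y i) → A x y = 0) ∧
  (∀ x y x' y', (∀ i ∈ S, x i = x' i) → (∀ i ∈ S, y i = y' i) →
    (∀ i ∉ S, x i = y i) → (∀ i ∉ S, x' i = y' i) → A x y = A x' y')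

namespace SupportedOn

variable {N d : ℕ} {A B : Matrix (Fin N → Fin d) (Fin N → Fin d) ℂ} {S T : Set (Fin N)}

lemma zero (S : Set (Fin N)) : SupportedOn (0 : Matrix (Fin N → Fin d) (Fin N → Fin d) ℂ) S :=
  ⟨fun _ _ _ => rfl, fun _ _ _ _ _ _ _ _ => rfl⟩

lemma smul (c : ℂ) (h : SupportedOn A S) : SupportedOn (c • A) S := by
  constructor
  · intro x y hxy
    simp [Matrix.smul_apply, h.1 x y hxy]
  · intro x y x' y' h1 h2 h3 h4
    simp only [Matrix.smul_apply]
    rw [h.2 x y x' y' h1 h2 h3 h4]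

lemma sub (hA : SupportedOn A S) (hB : SupportedOn B S) : SupportedOn (A - B) S := by
  constructor
  · intro x y hxy
    simp [Matrix.sub_apply, hA.1 x y hxy, hB.1 x y hxy]
  · intro x y x' y' h1 h2 h3 h4
    simp only [Matrix.sub_apply]
    rw [hA.2 x y x' y' h1 h2 h3 h4, hB.2 x y x' y' h1 h2 h3 h4]

lemma fsum {ι : Type*} (s : Finset ι) (f : ι → Matrix (Fin N → Fin d) (Fin N → Fin d) ℂ)
    (h : ∀ i ∈ s, SupportedOn (f i) S) : SupportedOn (∑ i ∈ s, f i) S := by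
  constructor
  · intro x y hxy
    rw [Matrix.sum_apply]
    exact Finset.sum_eq_zero fun i hi => (h i hi).1 x y hxy
  · intro x y x' y' h1 h2 h3 h4
    rw [Matrix.sum_apply, Matrix.sum_apply]
    exact Finset.sum_congr rfl fun i hi => (h i hi).2 x y x' y' h1 h2 h3 h4

lemma mono (h : SupportedOn A S) (hST : S ⊆ T) : SupportedOn A T := by
  constructor
  · rintro x y ⟨i, hi, hxy⟩
    exact h.1 x y ⟨i, fun hs => hi (hST hs), hxy⟩
  · intro x y x' y' hx hy hxy hx'y'
    by_cases hc : ∀ i ∉ S, x i = y i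
    · refine h.2 x y x' y' (fun i hi => hx i (hST hi)) (fun i hi => hy i (hST hi)) hc ?_
      intro i hi
      by_cases hiT : i ∈ T
      · rw [← hx i hiT, ← hy i hiT]; exact hc i hi
      · exact hx'y' i hiT
    · push_neg at hc
      obtain ⟨i, hiS, hne⟩ := hc
      rw [h.1 x y ⟨i, hiS, hne⟩, h.1 x' y' ?_]
      refine ⟨i, hiS, ?_⟩
      by_cases hiT : i ∈ T
      · rw [← hx i hiT, ← hy i hiT]; exact hne
      · exact absurd (hxy i hiT) hne

lemma mul (hA : SupportedOn A S) (hB : SupportedOn B T) : SupportedOn (A * B) (S ∪ T) := by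
  classical
  constructor
  · rintro x y ⟨i, hi, hxy⟩
    rw [Matrix.mul_apply]
    apply Finset.sum_eq_zero
    intro z _
    by_cases hz : A x z = 0
    · rw [hz, zero_mul]
    · have hxz : ∀ j ∉ S, x j = z j := by
        by_contra hcon; push_neg at hcon
        obtain ⟨j, hj1, hj2⟩ := hcon
        exact hz (hA.1 x z ⟨j, hj1, hj2⟩)
      have : z i ≠ y i := by
        rw [← hxz i (fun hs => hi (Or.inl hs))]; exact hxy
      rw [hB.1 z y ⟨i, fun ht => hi (Or.inr ht), this⟩, mul_zero]
  · intro x y x' y' hx hy hxy hx'y'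
    rw [Matrix.mul_apply, Matrix.mul_apply]
    set e : Fin N → (Fin d ≃ Fin d) := fun i =>
      if i ∈ S ∪ T then Equiv.refl _ else Equiv.swap (x i) (x' i) with he
    have hein : ∀ i ∈ S ∪ T, ∀ u, e i u = u := by
      intro i hi u
      rw [he]; dsimp only
      rw [if_pos hi]; rfl
    have heout : ∀ i ∉ S ∪ T, ∀ u, e i u = Equiv.swap (x i) (x' i) u := by
      intro i hi u
      rw [he]; dsimp only
      rw [if_neg hi]
    have key : ∀ z : Fin N → Fin d,
        A x z * B z y = A x' (fun i => e i (z i)) * B (fun i => e i (z i)) y' := by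
      intro z
      set w : Fin N → Fin d := fun i => e i (z i) with hw
      have hwin : ∀ i ∈ S ∪ T, w i = z i := fun i hi => hein i hi (z i)
      by_cases hcase : ∀ i ∉ S ∪ T, z i = x i
      · have hwout : ∀ i ∉ S ∪ T, w i = x' i := by
          intro i hi
          rw [hw]; dsimp only
          rw [heout i hi, hcase i hi, Equiv.swap_apply_left]
        by_cases hA0 : ∀ i ∉ S, x i = z i
        · by_cases hB0 : ∀ i ∉ T, z i = y i
          · have e1 : A x z = A x' w := by
              refine hA.2 x z x' w (fun i hi => hx i (Or.inl hi))
                (fun i hi => (hwin i (Or.inl hi)).symm) hA0 ?_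
              intro i hiS
              by_cases hiT : i ∈ T
              · rw [hwin i (Or.inr hiT), ← hA0 i hiS, hx i (Or.inr hiT)]
              · rw [hwout i (fun hu => hu.elim hiS hiT)]
            have e2 : B z y = B w y' := by
              refine hB.2 z y w y' (fun i hi => (hwin i (Or.inr hi)).symm)
                (fun i hi => hy i (Or.inr hi)) hB0 ?_
              intro i hiT
              by_cases hiS : i ∈ S
              · rw [hwin i (Or.inl hiS), hB0 i hiT, hy i (Or.inl hiS)]
              · rw [hwout i (fun hu => hu.elim hiS hiT), hx'y' i (fun hu => hu.elim hiS hiT)]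
            rw [e1, e2]
          · push_neg at hB0
            obtain ⟨i, hiT, hne⟩ := hB0
            have hiS : i ∈ S := by
              by_contra hiS
              exact hne (by rw [hcase i (fun hu => hu.elim hiS hiT), hxy i (fun hu => hu.elim hiS hiT)])
            rw [hB.1 z y ⟨i, hiT, hne⟩, mul_zero,
              hB.1 w y' ⟨i, hiT, by rw [hwin i (Or.inl hiS), ← hy i (Or.inl hiS)]; exact hne⟩,
              mul_zero]
        · push_neg at hA0
          obtain ⟨i, hiS, hne⟩ := hA0
          have hiT : i ∈ T := by
            by_contra hiT
            exact hne (hcase i (fun hu => hu.elim hiS hiT)).symm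
          rw [hA.1 x z ⟨i, hiS, hne⟩, zero_mul,
            hA.1 x' w ⟨i, hiS, by rw [hwin i (Or.inr hiT), ← hx i (Or.inr hiT)]; exact hne⟩,
            zero_mul]
      · push_neg at hcase
        obtain ⟨i, hi, hne⟩ := hcase
        have h1 : A x z = 0 := hA.1 x z ⟨i, fun hs => hi (Or.inl hs), fun hc => hne hc.symm⟩
        have h2 : A x' w = 0 := by
          refine hA.1 x' w ⟨i, fun hs => hi (Or.inl hs), fun hc => ?_⟩
          have hwi : w i = Equiv.swap (x i) (x' i) (z i) := heout i hi (z i)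
          have : Equiv.swap (x i) (x' i) (z i) = Equiv.swap (x i) (x' i) (x i) := by
            rw [Equiv.swap_apply_left, ← hwi, ← hc]
          exact hne ((Equiv.swap (x i) (x' i)).injective this)
        rw [h1, h2, zero_mul, zero_mul]
    calc (∑ z, A x z * B z y) = ∑ z, A x' ((Equiv.piCongrRight e) z) * B ((Equiv.piCongrRight e) z) y' := by
          refine Finset.sum_congr rfl fun z _ => ?_
          exact key z
      _ = ∑ z, A x' z * B z y' :=
          (Equiv.piCongrRight e).sum_comp (fun z => A x' z * B z y')

lemma commute_of_disjoint (hA : SupportedOn A S) (hB : SupportedOn B T)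
    (hST : ∀ i, i ∈ S → i ∉ T) : A * B = B * A := by
  classical
  ext x y
  rw [Matrix.mul_apply, Matrix.mul_apply]
  set e : Fin N → (Fin d ≃ Fin d) := fun i =>
    if i ∈ S ∪ T then Equiv.swap (x i) (y i) else Equiv.refl _ with he
  have hein : ∀ i ∈ S ∪ T, ∀ u, e i u = Equiv.swap (x i) (y i) u := by
    intro i hi u
    rw [he]; dsimp only
    rw [if_pos hi]
  have heout : ∀ i ∉ S ∪ T, ∀ u, e i u = u := by
    intro i hi u
    rw [he]; dsimp only
    rw [if_neg hi]; rfl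
  have hTS : ∀ i, i ∈ T → i ∉ S := fun i hiT hiS => hST i hiS hiT
  have key : ∀ z : Fin N → Fin d,
      A x z * B z y = B x (fun i => e i (z i)) * A (fun i => e i (z i)) y := by
    intro z
    set w : Fin N → Fin d := fun i => e i (z i) with hw
    have hwin : ∀ i ∈ S ∪ T, w i = Equiv.swap (x i) (y i) (z i) := fun i hi => hein i hi (z i)
    have hwout : ∀ i ∉ S ∪ T, w i = z i := fun i hi => heout i hi (z i)
    by_cases h1 : ∀ i ∉ S, x i = z i
    · by_cases h2 : ∀ i ∉ T, z i = y i
      · have hzS : ∀ i ∈ S, z i = y i := fun i hi => h2 i (hST i hi)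
        have hzT : ∀ i ∈ T, z i = x i := fun i hi => (h1 i (hTS i hi)).symm
        have hwS : ∀ i ∈ S, w i = x i := by
          intro i hi
          rw [hwin i (Or.inl hi), hzS i hi, Equiv.swap_apply_right]
        have hwT : ∀ i ∈ T, w i = y i := by
          intro i hi
          rw [hwin i (Or.inr hi), hzT i hi, Equiv.swap_apply_left]
        have e1 : A x z = A w y := by
          refine hA.2 x z w y (fun i hi => (hwS i hi).symm) hzS h1 ?_
          intro i hiS
          by_cases hiT : i ∈ T
          · exact hwT i hiT
          · rw [hwout i (fun hu => hu.elim hiS hiT), h2 i hiT]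
        have e2 : B z y = B x w := by
          refine hB.2 z y x w hzT (fun i hi => (hwT i hi).symm) h2 ?_
          intro i hiT
          by_cases hiS : i ∈ S
          · exact (hwS i hiS).symm
          · rw [hwout i (fun hu => hu.elim hiS hiT), ← h1 i hiS]
        rw [e1, e2, mul_comm]
      · push_neg at h2
        obtain ⟨i, hiT, hne⟩ := h2
        rw [hB.1 z y ⟨i, hiT, hne⟩, mul_zero]
        by_cases hiS : i ∈ S
        · have h0 : B x w = 0 := by
            refine hB.1 x w ⟨i, hiT, fun hc => hne ?_⟩
            have hwi : w i = Equiv.swap (x i) (y i) (z i) := hwin i (Or.inl hiS)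
            have : Equiv.swap (x i) (y i) (z i) = Equiv.swap (x i) (y i) (y i) := by
              rw [Equiv.swap_apply_right, ← hwi, ← hc]
            exact (Equiv.swap (x i) (y i)).injective this
          rw [h0, zero_mul]
        · have h0 : A w y = 0 := by
            refine hA.1 w y ⟨i, hiS, ?_⟩
            rw [hwout i (fun hu => hu.elim hiS hiT)]
            exact hne
          rw [h0, mul_zero]
    · push_neg at h1
      obtain ⟨i, hiS, hne⟩ := h1
      rw [hA.1 x z ⟨i, hiS, hne⟩, zero_mul]
      by_cases hiT : i ∈ T
      · have h0 : A w y = 0 := by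
          refine hA.1 w y ⟨i, hiS, fun hc => hne ?_⟩
          have hwi : w i = Equiv.swap (x i) (y i) (z i) := hwin i (Or.inr hiT)
          have : Equiv.swap (x i) (y i) (z i) = Equiv.swap (x i) (y i) (x i) := by
            rw [Equiv.swap_apply_left, ← hwi, hc]
          exact ((Equiv.swap (x i) (y i)).injective this).symm
        rw [h0, mul_zero]
      · have h0 : B x w = 0 := by
          refine hB.1 x w ⟨i, hiT, fun hc => hne ?_⟩
          rw [hwout i (fun hu => hu.elim hiS hiT)] at hc
          exact hc
        rw [h0, zero_mul]
  calc (∑ z, A x z * B z y)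
      = ∑ z, B x ((Equiv.piCongrRight e) z) * A ((Equiv.piCongrRight e) z) y :=
        Finset.sum_congr rfl fun z _ => key z
    _ = ∑ z, B x z * A z y := (Equiv.piCongrRight e).sum_comp (fun z => B x z * A z y)

end SupportedOn

def Ival (N : ℕ) (k m : ℕ) : Set (Fin N) := {j : Fin N | k ≤ (j : ℕ) ∧ (j : ℕ) < k + m}

lemma key_induction {N d : ℕ} (r : ℕ) (a b : ℝ) (ha0 : 0 ≤ a) (hb0 : 0 ≤ b)
    (A B : Fin N → Matrix (Fin N → Fin d) (Fin N → Fin d) ℂ)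
    (hA : ∀ i, SupportedOn (A i) (Ival N i (r + 1)))
    (hB : ∀ i, SupportedOn (B i) (Ival N i (r + 1)))
    (ha : ∀ i, ‖A i‖ ≤ a) (hb : ∀ i, ‖B i‖ ≤ b) :
    ∀ q : ℕ, ∃ C : Fin N → Matrix (Fin N → Fin d) (Fin N → Fin d) ℂ,
      (∀ i, SupportedOn (C i) (Ival N i (q * r + r + 1))) ∧
      ((fun X => (∑ i, A i) * X - X * (∑ i, A i))^[q] (∑ i, B i)) = ∑ i, C i ∧
      ∀ i, ‖C i‖ ≤ (((q + 1)! : ℕ) : ℝ) * (2 * ((r : ℝ) + 1) * a) ^ q * b := by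
  intro q
  induction q with
  | zero =>
    refine ⟨B, by simpa using hB, by simp, ?_⟩
    intro i
    simpa using hb i
  | succ q ih =>
    obtain ⟨C, hsupp, heq, hnorm⟩ := ih
    set L : ℕ := q * r + r + 1 with hL
    set c : ℝ := (((q + 1)! : ℕ) : ℝ) * (2 * ((r : ℝ) + 1) * a) ^ q * b with hc
    have hc0 : 0 ≤ c := by positivity
    set cond : Fin N → Fin N × Fin N → Prop := fun k p =>
      min (p.2 : ℕ) (p.1 : ℕ) = (k : ℕ) ∧ (p.1 : ℕ) < (p.2 : ℕ) + L ∧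
        (p.2 : ℕ) < (p.1 : ℕ) + (r + 1) with hcond
    have instDec : ∀ k p, Decidable (cond k p) := fun k p => by
      rw [hcond]; infer_instance
    set D : Fin N → Matrix (Fin N → Fin d) (Fin N → Fin d) ℂ := fun k =>
      ∑ p : Fin N × Fin N,
        if cond k p then A p.1 * C p.2 - C p.2 * A p.1 else 0 with hD
    refine ⟨D, ?_, ?_, ?_⟩
    · -- support
      intro k
      have : (q + 1) * r + r + 1 = L + r := by rw [hL]; ring
      rw [this]
      apply SupportedOn.fsum
      intro p _
      split_ifs with h
      · obtain ⟨hmin, h1, h2⟩ := h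
        have hsub : Ival N (p.1 : ℕ) (r + 1) ∪ Ival N (p.2 : ℕ) L ⊆ Ival N k (L + r) := by
          intro t ht
          rcases ht with ht | ht <;>
            (simp only [Ival, Set.mem_setOf_eq] at ht ⊢; omega)
        have hsub2 : Ival N (p.2 : ℕ) L ∪ Ival N (p.1 : ℕ) (r + 1) ⊆ Ival N k (L + r) := by
          intro t ht
          rcases ht with ht | ht <;>
            (simp only [Ival, Set.mem_setOf_eq] at ht ⊢; omega)
        have s1 := ((hA p.1).mul (hsupp p.2)).mono hsub
        have s2 := ((hsupp p.2).mul (hA p.1)).mono hsub2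
        exact s1.sub s2
      · exact SupportedOn.zero _
    · -- sum identity
      rw [Function.iterate_succ_apply', heq]
      show (∑ i, A i) * (∑ i, C i) - (∑ i, C i) * (∑ i, A i) = ∑ k, D k
      have h1 : ∑ k, D k = ∑ p : Fin N × Fin N, ∑ k : Fin N,
          (if cond k p then A p.1 * C p.2 - C p.2 * A p.1 else 0) := Finset.sum_comm
      have h2 : ∀ p : Fin N × Fin N,
          (∑ k : Fin N, (if cond k p then A p.1 * C p.2 - C p.2 * A p.1 else 0))
            = A p.1 * C p.2 - C p.2 * A p.1 := by
        intro p
        by_cases hov : (p.1 : ℕ) < (p.2 : ℕ) + L ∧ (p.2 : ℕ) < (p.1 : ℕ) + (r + 1)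
        · have hmlt : min (p.2 : ℕ) (p.1 : ℕ) < N :=
            lt_of_le_of_lt (min_le_right _ _) p.1.isLt
          rw [Finset.sum_eq_single (⟨min (p.2 : ℕ) (p.1 : ℕ), hmlt⟩ : Fin N)]
          · rw [if_pos ⟨rfl, hov⟩]
          · intro k _ hk
            rw [if_neg]
            rintro ⟨hmin, -⟩
            exact hk (Fin.ext hmin.symm)
          · intro h; exact absurd (Finset.mem_univ _) h
        · have hdisj : ∀ t, t ∈ Ival N (p.1 : ℕ) (r + 1) → t ∉ Ival N (p.2 : ℕ) L := by
            intro t ht1 ht2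
            simp only [Ival, Set.mem_setOf_eq] at ht1 ht2
            omega
          have hz : A p.1 * C p.2 - C p.2 * A p.1 = 0 := by
            rw [sub_eq_zero]
            exact SupportedOn.commute_of_disjoint (hA p.1) (hsupp p.2) hdisj
          simp [hz]
      rw [h1, Finset.sum_congr rfl (fun p _ => h2 p), Fintype.sum_prod_type]
      simp only [Finset.sum_sub_distrib, Finset.sum_mul, Finset.mul_sum]
      congr 1
      exact Finset.sum_comm
    · -- norm bound
      intro k
      have step1 : ‖D k‖ ≤ ∑ p : Fin N × Fin N,
          ‖(if cond k p then A p.1 * C p.2 - C p.2 * A p.1 else 0)‖ := norm_sum_le _ _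
      have step2 : ∀ p : Fin N × Fin N,
          ‖(if cond k p then A p.1 * C p.2 - C p.2 * A p.1 else 0)‖
            ≤ (if cond k p then 2 * a * c else 0) := by
        intro p
        split_ifs with h
        · have hmul1 : ‖A p.1 * C p.2‖ ≤ a * c :=
            le_trans (norm_mul_le _ _) (mul_le_mul (ha _) (hnorm _) (norm_nonneg _) ha0)
          have hmul2 : ‖C p.2 * A p.1‖ ≤ c * a :=
            le_trans (norm_mul_le _ _) (mul_le_mul (hnorm _) (ha _) (norm_nonneg _) hc0)
          calc ‖A p.1 * C p.2 - C p.2 * A p.1‖ ≤ ‖A p.1 * C p.2‖ + ‖C p.2 * A p.1‖ :=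
                norm_sub_le _ _
            _ ≤ a * c + c * a := add_le_add hmul1 hmul2
            _ = 2 * a * c := by ring
        · simp
      have hcard : (Finset.univ.filter (cond k)).card ≤ L + r := by
        have := Finset.card_le_card_of_injOn
          (f := fun p : Fin N × Fin N =>
            if (p.2 : ℕ) = (k : ℕ) then (p.1 : ℕ) - (k : ℕ)
            else L + ((p.2 : ℕ) - (k : ℕ) - 1))
          (s := Finset.univ.filter (cond k)) (t := Finset.range (L + r)) ?_ ?_
        · simpa using this
        · intro p hp
          simp only [Finset.coe_filter, Finset.mem_coe, Finset.mem_filter, Finset.mem_univ, true_and, Set.mem_setOf_eq] at hp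
          obtain ⟨hmin, h1, h2⟩ := hp
          simp only [Finset.coe_range, Set.mem_Iio, Finset.mem_coe, Finset.mem_range]
          split_ifs with hi <;> omega
        · intro p hp p' hp' hf
          simp only [Finset.coe_filter, Finset.mem_univ, true_and, Set.mem_setOf_eq] at hp hp'
          obtain ⟨hmin, h1, h2⟩ := hp
          obtain ⟨hmin', h1', h2'⟩ := hp'
          have hvals : (p.1 : ℕ) = (p'.1 : ℕ) ∧ (p.2 : ℕ) = (p'.2 : ℕ) := by
            dsimp only at hf
            split_ifs at hf <;> omega
          exact Prod.ext (Fin.ext hvals.1) (Fin.ext hvals.2)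
      have step3 : (∑ p : Fin N × Fin N, (if cond k p then 2 * a * c else 0 : ℝ))
          ≤ (L + r : ℕ) * (2 * a * c) := by
        rw [← Finset.sum_filter]
        rw [Finset.sum_const, nsmul_eq_mul]
        apply mul_le_mul_of_nonneg_right _ (by positivity)
        exact_mod_cast hcard
      have hLr : ((L + r : ℕ) : ℝ) ≤ ((q : ℝ) + 2) * ((r : ℝ) + 1) := by
        have : (L + r : ℕ) ≤ (q + 2) * (r + 1) := by rw [hL]; nlinarith [q.zero_le]
        calc ((L + r : ℕ) : ℝ) ≤ (((q + 2) * (r + 1) : ℕ) : ℝ) := by exact_mod_cast this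
          _ = ((q : ℝ) + 2) * ((r : ℝ) + 1) := by push_cast; ring
      have final : ‖D k‖ ≤ ((q : ℝ) + 2) * ((r : ℝ) + 1) * (2 * a * c) := by
        calc ‖D k‖ ≤ ∑ p : Fin N × Fin N,
              ‖(if cond k p then A p.1 * C p.2 - C p.2 * A p.1 else 0)‖ := step1
          _ ≤ ∑ p : Fin N × Fin N, (if cond k p then 2 * a * c else 0 : ℝ) :=
              Finset.sum_le_sum fun p _ => step2 p
          _ ≤ (L + r : ℕ) * (2 * a * c) := step3
          _ ≤ ((q : ℝ) + 2) * ((r : ℝ) + 1) * (2 * a * c) :=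
              mul_le_mul_of_nonneg_right hLr (by positivity)
      refine le_trans final (le_of_eq ?_)
      have hfact : (((q + 1 + 1)! : ℕ) : ℝ) = ((q : ℝ) + 2) * (((q + 1)! : ℕ) : ℝ) := by
        rw [Nat.factorial_succ]
        push_cast
        ring
      rw [hc, hfact, pow_succ]
      ring

/-- if `A = Σᵢ Aᵢ` and `B = Σᵢ Bᵢ` are extensive operators of range `R` with
local norms `≤ a`, `≤ b`, then for every `q ≥ 1` one can write
`(1/q!) (ad_A)^q B = Σᵢ Cᵢ` with each `Cᵢ` supported on an interval of at most
`q(R−1) + R` consecutive sites starting at `i`, and `‖Cᵢ‖ ≤ (q+1) (2Ra)^q b`. -/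
theorem iterated_commutator_of_extensive_operators {N d : ℕ} (hd : 2 ≤ d) (hN : 1 ≤ N)
    (R : ℕ) (hR : 1 ≤ R) (a b : ℝ)
    (A B : Fin N → Matrix (Fin N → Fin d) (Fin N → Fin d) ℂ)
    (hA : ∀ i, SupportedOn (A i) {j : Fin N | (i : ℕ) ≤ (j : ℕ) ∧ (j : ℕ) < (i : ℕ) + R})
    (hB : ∀ i, SupportedOn (B i) {j : Fin N | (i : ℕ) ≤ (j : ℕ) ∧ (j : ℕ) < (i : ℕ) + R})
    (ha : ∀ i, ‖A i‖ ≤ a) (hb : ∀ i, ‖B i‖ ≤ b) (q : ℕ) (hq : 1 ≤ q) :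
    ∃ C : Fin N → Matrix (Fin N → Fin d) (Fin N → Fin d) ℂ,
      (∀ i, SupportedOn (C i)
        {j : Fin N | (i : ℕ) ≤ (j : ℕ) ∧ (j : ℕ) < (i : ℕ) + (q * (R - 1) + R)}) ∧
      ((q ! : ℂ))⁻¹ •
        ((fun X => (∑ i, A i) * X - X * (∑ i, A i))^[q] (∑ i, B i)) = ∑ i, C i ∧
      ∀ i, ‖C i‖ ≤ ((q : ℝ) + 1) * (2 * (R : ℝ) * a) ^ q * b := by
  obtain ⟨r, rfl⟩ : ∃ r, R = r + 1 := ⟨R - 1, by omega⟩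
  simp only [Nat.add_sub_cancel]
  have ha0 : 0 ≤ a := le_trans (norm_nonneg _) (ha ⟨0, hN⟩)
  have hb0 : 0 ≤ b := le_trans (norm_nonneg _) (hb ⟨0, hN⟩)
  obtain ⟨D, hsupp, heq, hnorm⟩ := key_induction r a b ha0 hb0 A B hA hB ha hb q
  refine ⟨fun i => ((q ! : ℂ))⁻¹ • D i, ?_, ?_, ?_⟩
  · intro i
    exact SupportedOn.smul _ (hsupp i)
  · rw [heq, Finset.smul_sum]
  · intro i
    have hfq : (((q + 1)! : ℕ) : ℝ) = ((q : ℝ) + 1) * ((q ! : ℕ) : ℝ) := by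
      rw [Nat.factorial_succ]; push_cast; ring
    have hqpos : (0 : ℝ) < ((q ! : ℕ) : ℝ) := by exact_mod_cast q.factorial_pos
    calc ‖((q ! : ℂ))⁻¹ • D i‖ = ((q ! : ℕ) : ℝ)⁻¹ * ‖D i‖ := by
          rw [norm_smul, norm_inv, Complex.norm_natCast]
      _ ≤ ((q ! : ℕ) : ℝ)⁻¹ * ((((q + 1)! : ℕ) : ℝ) * (2 * ((r : ℝ) + 1) * a) ^ q * b) := by
          exact mul_le_mul_of_nonneg_left (hnorm i) (by positivity)
      _ = ((q : ℝ) + 1) * (2 * ((r : ℝ) + 1) * a) ^ q * b := by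
          rw [hfq]; field_simp
      _ = ((q : ℝ) + 1) * (2 * ((r + 1 : ℕ) : ℝ) * a) ^ q * b := by push_cast; ring
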